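/- There exists an absolute constant c > 0 such that the following holds. Let G = (V,E) be a finite connected simple graph, let K₁,…,K_ℓ ⊆ V be sets of terminals each of even size with k = Σ_{i=1}^ℓ |K_i| ≥ 2, and for each i let M_i be a perfect matching of K_i with d(G,M_i) ≥ (1/2)·σ_{K_i}(G). For each j ∈ {1,…,ℓ} and each cut C, let b^j(C) be the number of pairs of M_j separated by C. Then c·(Σ_{i=1}^ℓ σ_{K_i}(G)) / log₂ k ≤ LP^L(G) ≤ LP^U(G) ≤ Σ_{i=1}^ℓ σ_{K_i}(G). -/

import Mathlib

open Finset
open scoped Classical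

variable {V : Type} [Fintype V] [DecidableEq V]

/-- A cut of a graph on vertex set `V`: a nonempty proper subset of the vertices. -/
def IsCut (C : Finset V) : Prop := C.Nonempty ∧ C ≠ Finset.univ

/-- The unordered pair `e` crosses the cut `C`: exactly one of its endpoints lies in `C`. -/
def Crosses (C : Finset V) (e : Sym2 V) : Prop :=
  ∃ u v, e = s(u, v) ∧ u ∈ C ∧ v ∉ C

/-- `δ(C)`: the edges of `G` with exactly one endpoint in `C`. -/
noncomputable def cutEdges (G : SimpleGraph V) (C : Finset V) : Finset (Sym2 V) :=
  G.edgeFinset.filter (Crosses C)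

/-- The optimum value of `LP^L(G)`: minimize `∑_{e∈E} x_e` subject to
`∑_{e∈δ(C)} x_e ≥ ∑_i b^i(C)` for every cut `C`, `x ≥ 0`. -/
noncomputable def LPL (G : SimpleGraph V) (ℓ : ℕ) (b : Fin ℓ → Finset V → ℝ) : ℝ :=
  sInf { y | ∃ x : Sym2 V → ℝ, (∀ e, 0 ≤ x e) ∧
    (∀ C : Finset V, IsCut C → ∑ i, b i C ≤ ∑ e ∈ cutEdges G C, x e) ∧
    y = ∑ e ∈ G.edgeFinset, x e }

/-- The optimum value of `LP^U(G)`: minimize `∑_i ∑_{e∈E} x_{i,e}` subject to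
`∑_{e∈δ(C)} x_{i,e} ≥ b^i(C)` for every cut `C` and every `i`, `x ≥ 0`. -/
noncomputable def LPU (G : SimpleGraph V) (ℓ : ℕ) (b : Fin ℓ → Finset V → ℝ) : ℝ :=
  sInf { y | ∃ x : Fin ℓ → Sym2 V → ℝ, (∀ i e, 0 ≤ x i e) ∧
    (∀ (i : Fin ℓ) (C : Finset V), IsCut C → b i C ≤ ∑ e ∈ cutEdges G C, x i e) ∧
    y = ∑ i, ∑ e ∈ G.edgeFinset, x i e }

/-- The cut values `b` satisfy the sub-additive property. -/
def SubAdd (ℓ : ℕ) (b : Fin ℓ → Finset V → ℝ) : Prop :=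
  ∀ (i : Fin ℓ) (C₁ C₂ : Finset V), IsCut C₁ → IsCut C₂ → IsCut (C₁ ∪ C₂) →
    b i (C₁ ∪ C₂) ≤ b i C₁ + b i C₂

/-- The cut values `b` are nonnegative on cuts. -/
def CutNonneg (ℓ : ℕ) (b : Fin ℓ → Finset V → ℝ) : Prop :=
  ∀ (i : Fin ℓ) (C : Finset V), IsCut C → 0 ≤ b i C

/-- `σ_K(G) = min_{v∈V} ∑_{w∈K} d_G(v,w)`: the 1-median cost of `K` in `G`. -/
noncomputable def sigmaK (G : SimpleGraph V) (K : Finset V) : ℕ :=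
  sInf { n | ∃ v : V, n = ∑ w ∈ K, G.dist v w }

/-- `M` is a perfect matching of `K`: a collection of disjoint unordered pairs of distinct
vertices partitioning `K`. -/
def IsPerfectMatchingOn (K : Finset V) (M : Finset (Sym2 V)) : Prop :=
  (∀ p ∈ M, ¬ p.IsDiag) ∧
  (∀ v ∈ K, ∃! p, p ∈ M ∧ v ∈ p) ∧
  (∀ p ∈ M, ∀ v ∈ p, v ∈ K)

/-- `d(G,M) = ∑_{{u,v}∈M} d_G(u,v)`. -/
noncomputable def matchCost (G : SimpleGraph V) (M : Finset (Sym2 V)) : ℕ :=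
  ∑ p ∈ M, Sym2.lift ⟨fun u v => G.dist u v, fun _ _ => SimpleGraph.dist_comm⟩ p

set_option linter.unusedSectionVars false
namespace S10
open SimpleGraph

variable {V : Type} [Fintype V] [DecidableEq V]

lemma crosses_mk {C : Finset V} {u v : V} :
    Crosses C s(u, v) ↔ (u ∈ C ∧ v ∉ C) ∨ (v ∈ C ∧ u ∉ C) := by
  constructor
  · rintro ⟨a, b, hab, ha, hb⟩
    rw [Sym2.eq_iff] at hab
    rcases hab with ⟨rfl, rfl⟩ | ⟨rfl, rfl⟩
    · exact Or.inl ⟨ha, hb⟩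
    · exact Or.inr ⟨ha, hb⟩
  · rintro (⟨h1, h2⟩ | ⟨h1, h2⟩)
    · exact ⟨u, v, rfl, h1, h2⟩
    · exact ⟨v, u, Sym2.eq_swap.symm, h1, h2⟩

lemma isCut_of_crosses {C : Finset V} {e : Sym2 V} (h : Crosses C e) : IsCut C := by
  obtain ⟨u, v, _, hu, hv⟩ := h
  exact ⟨⟨u, hu⟩, fun hC => hv (hC ▸ Finset.mem_univ v)⟩

lemma walk_cross {G : SimpleGraph V} {C : Finset V} :
    ∀ {u v : V} (W : G.Walk u v), u ∈ C → v ∉ C → ∃ e ∈ W.edges, e ∈ cutEdges G C := by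
  intro u v W
  induction W with
  | nil => intro h1 h2; exact absurd h1 h2
  | @cons a b c hadj W ih =>
    intro h1 h2
    by_cases hb : b ∈ C
    · obtain ⟨e, he1, he2⟩ := ih hb h2
      exact ⟨e, by simp [he1], he2⟩
    · refine ⟨s(a, b), by simp, ?_⟩
      simp only [cutEdges, Finset.mem_filter, SimpleGraph.mem_edgeFinset, SimpleGraph.mem_edgeSet]
      exact ⟨hadj, a, b, rfl, h1, hb⟩

lemma walk_cross' {G : SimpleGraph V} {C : Finset V} {u v : V} (W : G.Walk u v)
    (h : (u ∈ C) ≠ (v ∈ C)) : ∃ e ∈ W.edges, e ∈ cutEdges G C := by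
  by_cases hu : u ∈ C
  · exact walk_cross W hu (by simpa [hu] using h)
  · have hv : v ∈ C := by
      by_contra hv; exact h (by simp [hu, hv])
    obtain ⟨e, he1, he2⟩ := walk_cross W.reverse hv hu
    exact ⟨e, by simpa using he1, he2⟩

lemma sum_count_eq_length {l : List (Sym2 V)} {s : Finset (Sym2 V)}
    (h : ∀ e ∈ l, e ∈ s) : ∑ e ∈ s, l.count e = l.length := by
  rw [← List.sum_toFinset_count_eq_length l]
  exact (Finset.sum_subset (fun e he => h e (List.mem_toFinset.1 he))
    (fun e _ he => by rwa [List.count_eq_zero, ← List.mem_toFinset])).symm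

end S10

namespace S10B
open SimpleGraph S10
set_option linter.unusedSectionVars false

variable {V : Type} [Fintype V] [DecidableEq V]

lemma card_filter_crosses_le {C : Finset V} {K : Finset V} {M : Finset (Sym2 V)}
    (hpm : IsPerfectMatchingOn K M) (v0 : V) :
    (M.filter (Crosses C)).card ≤ (K.filter (fun w => ¬((w ∈ C) ↔ (v0 ∈ C)))).card := by
  obtain ⟨hdiag, huniq, hmem⟩ := hpm
  have hch : ∀ p ∈ M.filter (Crosses C), ∃ w, w ∈ p ∧ ¬((w ∈ C) ↔ (v0 ∈ C)) := by
    intro p hp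
    rw [Finset.mem_filter] at hp
    obtain ⟨a, b, rfl, ha, hb⟩ := hp.2
    by_cases h0 : v0 ∈ C
    · exact ⟨b, Sym2.mem_mk_right a b, by simp [hb, h0]⟩
    · exact ⟨a, Sym2.mem_mk_left a b, by simp [ha, h0]⟩
  classical
  apply Finset.card_le_card_of_injOn
    (fun p => if h : ∃ w, w ∈ p ∧ ¬((w ∈ C) ↔ (v0 ∈ C)) then h.choose else v0)
  · intro p hp
    have h := hch p hp
    simp only [dif_pos h, Finset.mem_coe]
    obtain ⟨hw1, hw2⟩ := h.choose_spec
    rw [Finset.mem_coe, Finset.mem_filter] at hp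
    rw [Finset.mem_filter]
    exact ⟨hmem p hp.1 _ hw1, hw2⟩
  · intro p hp q hq hpq
    have h1 := hch p hp
    have h2 := hch q hq
    dsimp only at hpq
    rw [dif_pos h1, dif_pos h2] at hpq
    obtain ⟨hw1, _⟩ := h1.choose_spec
    obtain ⟨hw2, _⟩ := h2.choose_spec
    rw [Finset.mem_coe, Finset.mem_filter] at hp hq
    have hK : h1.choose ∈ K := hmem p hp.1 _ hw1
    exact ((huniq _ hK).unique ⟨hp.1, hw1⟩ ⟨hq.1, hpq ▸ hw2⟩ : p = q)

lemma matching_cut_le {G : SimpleGraph V} {C : Finset V} {K : Finset V} {M : Finset (Sym2 V)}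
    (hpm : IsPerfectMatchingOn K M) (v0 : V) (W : ∀ w : V, G.Walk v0 w) :
    (M.filter (Crosses C)).card ≤ ∑ e ∈ cutEdges G C, ∑ w ∈ K, (W w).edges.count e := by
  refine le_trans (card_filter_crosses_le hpm v0) ?_
  rw [Finset.sum_comm]
  calc (K.filter (fun w => ¬((w ∈ C) ↔ (v0 ∈ C)))).card
      = ∑ w ∈ K.filter (fun w => ¬((w ∈ C) ↔ (v0 ∈ C))), 1 := by simp
    _ ≤ ∑ w ∈ K.filter (fun w => ¬((w ∈ C) ↔ (v0 ∈ C))),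
          ∑ e ∈ cutEdges G C, (W w).edges.count e := by
        refine Finset.sum_le_sum (fun w hw => ?_)
        rw [Finset.mem_filter] at hw
        have hne : (v0 ∈ C) ≠ (w ∈ C) := fun he => hw.2 (iff_of_eq he.symm)
        obtain ⟨e, he1, he2⟩ := walk_cross' (W w) hne
        calc 1 ≤ (W w).edges.count e := List.count_pos_iff.2 he1
          _ ≤ ∑ e ∈ cutEdges G C, (W w).edges.count e :=
            Finset.single_le_sum (f := fun e => List.count e (W w).edges)
              (fun _ _ => Nat.zero_le _) he2
    _ ≤ ∑ w ∈ K, ∑ e ∈ cutEdges G C, (W w).edges.count e :=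
        Finset.sum_le_sum_of_subset (Finset.filter_subset _ _)

lemma lpu_witness {G : SimpleGraph V} (hconn : G.Connected) (ℓ : ℕ)
    (K : Fin ℓ → Finset V) (M : Fin ℓ → Finset (Sym2 V))
    (hpm : ∀ i, IsPerfectMatchingOn (K i) (M i)) :
    ∃ x : Fin ℓ → Sym2 V → ℝ, (∀ i e, 0 ≤ x i e) ∧
      (∀ (i : Fin ℓ) (C : Finset V), IsCut C →
        ((((M i).filter (Crosses C)).card : ℝ)) ≤ ∑ e ∈ cutEdges G C, x i e) ∧
      ∑ i, ∑ e ∈ G.edgeFinset, x i e = ∑ i, (sigmaK G (K i) : ℝ) := by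
  have hne : Nonempty V := hconn.nonempty
  have hset : ∀ i : Fin ℓ, ∃ v : V, sigmaK G (K i) = ∑ w ∈ K i, G.dist v w := by
    intro i
    exact Nat.sInf_mem (⟨∑ w ∈ K i, G.dist (Classical.arbitrary V) w,
      ⟨Classical.arbitrary V, rfl⟩⟩ : {n | ∃ v : V, n = ∑ w ∈ K i, G.dist v w}.Nonempty)
  choose v0 hv0 using hset
  have hW : ∀ (i : Fin ℓ) (w : V), ∃ p : G.Walk (v0 i) w, p.length = G.dist (v0 i) w :=
    fun i w => hconn.exists_walk_length_eq_dist (v0 i) w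
  choose W hWlen using hW
  refine ⟨fun i e => ((∑ w ∈ K i, (W i w).edges.count e : ℕ) : ℝ), ?_, ?_, ?_⟩
  · intro i e; positivity
  · intro i C _
    have h := matching_cut_le (hpm i) (v0 i) (W i) (C := C)
    calc ((((M i).filter (Crosses C)).card : ℝ))
        ≤ ((∑ e ∈ cutEdges G C, ∑ w ∈ K i, (W i w).edges.count e : ℕ) : ℝ) := by
          exact_mod_cast h
      _ = ∑ e ∈ cutEdges G C, ((∑ w ∈ K i, (W i w).edges.count e : ℕ) : ℝ) := by push_cast; rfl
  · refine Finset.sum_congr rfl (fun i _ => ?_)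
    have : ∑ e ∈ G.edgeFinset, (∑ w ∈ K i, (W i w).edges.count e : ℕ)
        = ∑ w ∈ K i, G.dist (v0 i) w := by
      rw [Finset.sum_comm]
      refine Finset.sum_congr rfl (fun w _ => ?_)
      rw [sum_count_eq_length (fun e he => SimpleGraph.mem_edgeFinset.2
        ((W i w).edges_subset_edgeSet he))]
      rw [SimpleGraph.Walk.length_edges, hWlen]
    rw [← hv0 i] at this
    push_cast [← this]
    rfl

end S10B

namespace S10C
open SimpleGraph S10
set_option linter.unusedSectionVars false

variable {V : Type} [Fintype V] [DecidableEq V]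

noncomputable def cutC (G : SimpleGraph V) (S : Finset V) (r : ℕ) : Finset V :=
  Finset.univ.filter (fun v => ∃ s ∈ S, G.dist v s ≤ r)

lemma mem_cutC {G : SimpleGraph V} {S : Finset V} {r : ℕ} {v : V} :
    v ∈ cutC G S r ↔ ∃ s ∈ S, G.dist v s ≤ r := by
  simp [cutC]

lemma cutC_mono {G : SimpleGraph V} {S : Finset V} {r r' : ℕ} (h : r ≤ r') :
    cutC G S r ⊆ cutC G S r' := by
  intro v hv
  obtain ⟨s, hs, hd⟩ := mem_cutC.1 hv
  exact mem_cutC.2 ⟨s, hs, le_trans hd h⟩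

lemma cutC_adj {G : SimpleGraph V} (hconn : G.Connected) {u v : V} {S : Finset V} {r : ℕ}
    (hadj : G.Adj u v) (hv : v ∈ cutC G S r) : u ∈ cutC G S (r + 1) := by
  obtain ⟨s, hs, hd⟩ := mem_cutC.1 hv
  refine mem_cutC.2 ⟨s, hs, ?_⟩
  calc G.dist u s ≤ G.dist u v + G.dist v s := hconn.dist_triangle
    _ ≤ 1 + r := by
        have : G.dist u v = 1 := SimpleGraph.dist_eq_one_iff_adj.2 hadj
        omega
    _ = r + 1 := by omega

lemma not_crosses_of_crosses_lt {G : SimpleGraph V} (hconn : G.Connected) {S : Finset V}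
    {r1 r2 : ℕ} (hlt : r1 < r2) {e : Sym2 V} (he : e ∈ G.edgeFinset)
    (h1 : Crosses (cutC G S r1) e) : ¬ Crosses (cutC G S r2) e := by
  obtain ⟨u, v, heq, hu, hv⟩ := h1
  have hadj : G.Adj u v := by
    rw [heq, SimpleGraph.mem_edgeFinset, SimpleGraph.mem_edgeSet] at he
    exact he
  have huv2 : u ∈ cutC G S r2 := cutC_mono (le_of_lt hlt) hu
  have hv2 : v ∈ cutC G S r2 := by
    have := cutC_adj hconn hadj.symm hu
    exact cutC_mono (by omega : r1 + 1 ≤ r2) this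
  rintro ⟨a, b, hab, ha, hb⟩
  rw [heq, Sym2.eq_iff] at hab
  rcases hab with ⟨rfl, rfl⟩ | ⟨rfl, rfl⟩
  · exact hb hv2
  · exact hb huv2

lemma cross_count_le_one {G : SimpleGraph V} (hconn : G.Connected) (S : Finset V) (R : ℕ)
    {e : Sym2 V} (he : e ∈ G.edgeFinset) :
    ((Finset.range R).filter (fun r => Crosses (cutC G S r) e)).card ≤ 1 := by
  rw [Finset.card_le_one]
  intro r1 h1 r2 h2
  rw [Finset.mem_filter] at h1 h2
  rcases lt_trichotomy r1 r2 with h | h | h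
  · exact absurd h2.2 (not_crosses_of_crosses_lt hconn h he h1.2)
  · exact h
  · exact absurd h1.2 (not_crosses_of_crosses_lt hconn h he h2.2)

lemma sum_powerset_weight (U : Finset V) (p : ℝ) :
    ∑ S ∈ U.powerset, p ^ S.card * (1 - p) ^ (U.card - S.card) = 1 := by
  have h := Finset.prod_add (fun _ : V => p) (fun _ : V => 1 - p) U
  simp only [add_sub_cancel, Finset.prod_const] at h
  rw [one_pow] at h
  refine Eq.trans ?_ h.symm
  exact Finset.sum_congr rfl (fun S hS => by
    rw [Finset.card_sdiff_of_subset (Finset.mem_powerset.1 hS)])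

lemma sum_weight_miss (T X : Finset V) (hX : X ⊆ T) (p : ℝ) :
    ∑ S ∈ T.powerset.filter (fun S => S ∩ X = ∅), p ^ S.card * (1 - p) ^ (T.card - S.card)
      = (1 - p) ^ X.card := by
  have hidx : T.powerset.filter (fun S => S ∩ X = ∅) = (T \ X).powerset := by
    ext S
    rw [Finset.mem_filter, Finset.mem_powerset, Finset.mem_powerset, Finset.subset_sdiff,
      ← Finset.disjoint_iff_inter_eq_empty]
  rw [hidx]
  have hXC : X.card ≤ T.card := Finset.card_le_card hX
  have hTX : (T \ X).card = T.card - X.card := Finset.card_sdiff_of_subset hX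
  calc ∑ S ∈ (T \ X).powerset, p ^ S.card * (1 - p) ^ (T.card - S.card)
      = ∑ S ∈ (T \ X).powerset,
          (1 - p) ^ X.card * (p ^ S.card * (1 - p) ^ ((T \ X).card - S.card)) := by
        refine Finset.sum_congr rfl (fun S hS => ?_)
        rw [Finset.mem_powerset] at hS
        have hSC : S.card ≤ (T \ X).card := Finset.card_le_card hS
        have : T.card - S.card = X.card + ((T \ X).card - S.card) := by omega
        rw [this, pow_add]
        ring
    _ = (1 - p) ^ X.card := by
        rw [← Finset.mul_sum, sum_powerset_weight (T \ X) p, mul_one]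

lemma sum_weight_event (T A B : Finset V) (hA : A ⊆ T) (hB : B ⊆ T) (hAB : Disjoint A B)
    (p : ℝ) :
    ∑ S ∈ T.powerset.filter (fun S => (S ∩ A).Nonempty ∧ S ∩ B = ∅),
        p ^ S.card * (1 - p) ^ (T.card - S.card)
      = (1 - p) ^ B.card - (1 - p) ^ (A.card + B.card) := by
  have key := sum_weight_miss T B hB p
  rw [← Finset.sum_filter_add_sum_filter_not (T.powerset.filter (fun S => S ∩ B = ∅))
    (fun S => (S ∩ A).Nonempty)] at key
  have h1 : (T.powerset.filter (fun S => S ∩ B = ∅)).filter (fun S => (S ∩ A).Nonempty)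
      = T.powerset.filter (fun S => (S ∩ A).Nonempty ∧ S ∩ B = ∅) := by
    rw [Finset.filter_filter]
    exact Finset.filter_congr (fun S _ => by tauto)
  have h2 : (T.powerset.filter (fun S => S ∩ B = ∅)).filter (fun S => ¬ (S ∩ A).Nonempty)
      = T.powerset.filter (fun S => S ∩ (A ∪ B) = ∅) := by
    rw [Finset.filter_filter]
    refine Finset.filter_congr (fun S _ => ?_)
    rw [Finset.not_nonempty_iff_eq_empty, Finset.inter_union_distrib_left,
      Finset.union_eq_empty]
    tauto
  rw [h1, h2, sum_weight_miss T (A ∪ B) (Finset.union_subset hA hB) p,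
    Finset.card_union_of_disjoint hAB] at key
  linarith [key]

end S10C

namespace S10C
set_option linter.unusedSectionVars false
open SimpleGraph S10

variable {V : Type} [Fintype V] [DecidableEq V]

noncomputable def wgt (T : Finset V) (p : ℝ) (S : Finset V) : ℝ :=
  p ^ S.card * (1 - p) ^ (T.card - S.card)

noncomputable def pr (i : ℕ) : ℝ := ((2:ℝ) ^ (i + 2))⁻¹

lemma pr_pos (i : ℕ) : 0 < pr i := by
  unfold pr; positivity

lemma pr_le (i : ℕ) : pr i ≤ 1/4 := by
  unfold pr
  rw [show (1:ℝ)/4 = ((4:ℝ))⁻¹ by norm_num]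
  refine inv_anti₀ (by norm_num) ?_
  calc (4:ℝ) = 2^2 := by norm_num
    _ ≤ 2^(i+2) := pow_le_pow_right₀ one_le_two (by omega)

lemma wgt_nonneg (T : Finset V) (i : ℕ) (S : Finset V) : 0 ≤ wgt T (pr i) S := by
  have h1 := pr_pos i
  have h2 := pr_le i
  unfold wgt
  exact mul_nonneg (pow_nonneg (le_of_lt h1) _) (pow_nonneg (by linarith) _)

lemma pow_miss_ge {p : ℝ} (hp0 : 0 ≤ p) (hp2 : p ≤ 1) (n : ℕ) (h : (n : ℝ) * p ≤ 1/2) :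
    1/2 ≤ (1 - p) ^ n := by
  have h1 : (1:ℝ) + n * (-p) ≤ (1 + (-p)) ^ n := one_add_mul_le_pow (by linarith) n
  have h2 : (1:ℝ) + (-p) = 1 - p := by ring
  rw [h2] at h1
  nlinarith [h1]

lemma pow_hit_le {p : ℝ} (hp0 : 0 ≤ p) (hp1 : p ≤ 1) {n : ℕ} (h : 1/4 ≤ (n:ℝ) * p) :
    (1 - p) ^ n ≤ 4/5 := by
  have h1 : (1 - p) ^ n * (1 + p) ^ n = (1 - p^2) ^ n := by
    rw [← mul_pow]; ring_nf
  have h2 : (1 - p^2 : ℝ) ^ n ≤ 1 :=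
    pow_le_one₀ (by nlinarith) (by nlinarith)
  have h3 : (1:ℝ) + n * p ≤ (1 + p) ^ n := one_add_mul_le_pow (by linarith) n
  have h4 : (0:ℝ) ≤ (1 - p) ^ n := pow_nonneg (by linarith) n
  have h5 : (1 - p) ^ n * (1 + n * p) ≤ 1 := by
    calc (1 - p) ^ n * (1 + n * p) ≤ (1 - p) ^ n * (1 + p) ^ n :=
          mul_le_mul_of_nonneg_left h3 h4
      _ ≤ 1 := by rw [h1]; exact h2
  nlinarith [h5]

noncomputable def tball (G : SimpleGraph V) (T : Finset V) (x : V) (ρ : ℕ) : Finset V :=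
  T.filter (fun t => G.dist x t ≤ ρ)

lemma level_core {G : SimpleGraph V} (hconn : G.Connected) (T : Finset V) {a b ω ω' : V}
    (hsym : s(ω', ω) = s(a, b)) {i R : ℕ} {ρ' ρ cap d : ℕ}
    (hd : G.dist ω' ω = d)
    (hρ'ρ : ρ' < ρ) (hρcap : ρ ≤ cap) (hcap : 4 * cap ≤ d) (hdR : d < R)
    (hB : (tball G T ω (ρ - 1)).card < 2 ^ (i + 1))
    (hA : 2 ^ i ≤ (tball G T ω' ρ').card) :
    (1:ℝ)/10 * ((ρ:ℝ) - ρ') ≤ ∑ S ∈ T.powerset, wgt T (pr i) S *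
      (((Finset.range R).filter (fun r => Crosses (cutC G S r) s(a, b))).card : ℝ) := by
  have hcap1 : 1 ≤ cap := by omega
  have hd4 : 4 ≤ d := by omega
  set A := tball G T ω' ρ' with hAdef
  set B := tball G T ω (ρ - 1) with hBdef
  have hAT : A ⊆ T := Finset.filter_subset _ _
  have hBT : B ⊆ T := Finset.filter_subset _ _
  have hdisj : Disjoint A B := by
    rw [Finset.disjoint_left]
    intro t htA htB
    rw [hAdef, tball, Finset.mem_filter] at htA
    rw [hBdef, tball, Finset.mem_filter] at htB
    have : G.dist ω' ω ≤ G.dist ω' t + G.dist t ω := hconn.dist_triangle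
    rw [SimpleGraph.dist_comm (u := t)] at this
    omega
  -- probability bound
  have hp0 : (0:ℝ) ≤ pr i := le_of_lt (pr_pos i)
  have hp1 : pr i ≤ 1 := le_trans (pr_le i) (by norm_num)
  have hq0 : (0:ℝ) ≤ 1 - pr i := by linarith
  have h2ne : ((2:ℝ))^(i+1) ≠ 0 := by positivity
  have e1 : (2:ℝ)^(i+1) * pr i = 1/2 := by
    unfold pr
    rw [show i+2 = (i+1)+1 by omega, pow_succ]
    field_simp
    ring
  have e2 : (2:ℝ)^i * pr i = 1/4 := by
    unfold pr
    rw [show i+2 = i+2 by rfl, pow_add]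
    have : ((2:ℝ))^i ≠ 0 := by positivity
    field_simp
    ring
  have hqB : 1/2 ≤ (1 - pr i) ^ B.card := by
    refine pow_miss_ge hp0 hp1 _ ?_
    have hc : (B.card : ℝ) ≤ (2:ℝ)^(i+1) := by
      have : (B.card : ℝ) ≤ ((2^(i+1) : ℕ) : ℝ) := by exact_mod_cast le_of_lt hB
      simpa using this
    calc (B.card : ℝ) * pr i ≤ (2:ℝ)^(i+1) * pr i :=
          mul_le_mul_of_nonneg_right hc hp0
      _ = 1/2 := e1
  have hqA : (1 - pr i) ^ A.card ≤ 4/5 := by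
    refine pow_hit_le hp0 hp1 ?_
    have hc : (2:ℝ)^i ≤ (A.card : ℝ) := by
      have : ((2^i : ℕ) : ℝ) ≤ (A.card : ℝ) := by exact_mod_cast hA
      simpa using this
    calc (1:ℝ)/4 = (2:ℝ)^i * pr i := e2.symm
      _ ≤ (A.card : ℝ) * pr i := mul_le_mul_of_nonneg_right hc hp0
  have hqB1 : (1 - pr i) ^ B.card ≤ 1 := pow_le_one₀ hq0 (by linarith)
  have hP : (1:ℝ)/10 ≤ (1 - pr i) ^ B.card - (1 - pr i) ^ (A.card + B.card) := by
    rw [pow_add]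
    have hqB0 : (0:ℝ) ≤ (1 - pr i) ^ B.card := pow_nonneg hq0 _
    nlinarith [mul_le_mul_of_nonneg_right hqA hqB0]
  -- separation on the event
  have hsep : ∀ S ∈ T.powerset.filter (fun S => (S ∩ A).Nonempty ∧ S ∩ B = ∅),
      ((ρ:ℝ) - ρ') ≤
        (((Finset.range R).filter (fun r => Crosses (cutC G S r) s(a, b))).card : ℝ) := by
    intro S hS
    rw [Finset.mem_filter, Finset.mem_powerset] at hS
    obtain ⟨hST, ⟨t, ht⟩, hSB⟩ := hS
    rw [Finset.mem_inter] at ht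
    have hico : Finset.Ico ρ' ρ ⊆
        (Finset.range R).filter (fun r => Crosses (cutC G S r) s(a, b)) := by
      intro r hr
      rw [Finset.mem_Ico] at hr
      rw [Finset.mem_filter, Finset.mem_range]
      constructor
      · omega
      · rw [← hsym]
        refine ⟨ω', ω, rfl, ?_, ?_⟩
        · refine mem_cutC.2 ⟨t, ht.1, ?_⟩
          have := (Finset.mem_filter.1 ht.2).2
          omega
        · intro hmem
          obtain ⟨s, hsS, hds⟩ := mem_cutC.1 hmem
          have hsB : s ∈ B := by
            rw [hBdef, tball, Finset.mem_filter]
            exact ⟨hST hsS, by omega⟩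
          have : s ∈ S ∩ B := Finset.mem_inter.2 ⟨hsS, hsB⟩
          rw [hSB] at this
          exact absurd this (Finset.notMem_empty s)
    have := Finset.card_le_card hico
    rw [Nat.card_Ico] at this
    have hcast : ((ρ - ρ' : ℕ) : ℝ) ≤ _ := Nat.cast_le.2 this
    push_cast at hcast
    rw [Nat.cast_sub (le_of_lt hρ'ρ)] at hcast
    exact hcast
  -- assemble
  have hev := sum_weight_event T A B hAT hBT hdisj (pr i)
  calc (1:ℝ)/10 * ((ρ:ℝ) - ρ')
      ≤ ((1 - pr i) ^ B.card - (1 - pr i) ^ (A.card + B.card)) * ((ρ:ℝ) - ρ') := by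
        have : (0:ℝ) ≤ (ρ:ℝ) - ρ' := by
          have : (ρ':ℝ) ≤ ρ := by exact_mod_cast le_of_lt hρ'ρ
          linarith
        nlinarith [hP, this]
    _ = ∑ S ∈ T.powerset.filter (fun S => (S ∩ A).Nonempty ∧ S ∩ B = ∅),
          wgt T (pr i) S * ((ρ:ℝ) - ρ') := by
        rw [← Finset.sum_mul, ← hev]
        rfl
    _ ≤ ∑ S ∈ T.powerset.filter (fun S => (S ∩ A).Nonempty ∧ S ∩ B = ∅),
          wgt T (pr i) S *
            (((Finset.range R).filter (fun r => Crosses (cutC G S r) s(a, b))).card : ℝ) := by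
        refine Finset.sum_le_sum (fun S hS => ?_)
        exact mul_le_mul_of_nonneg_left (hsep S hS) (wgt_nonneg T i S)
    _ ≤ ∑ S ∈ T.powerset, wgt T (pr i) S *
          (((Finset.range R).filter (fun r => Crosses (cutC G S r) s(a, b))).card : ℝ) := by
        refine Finset.sum_le_sum_of_subset_of_nonneg (Finset.filter_subset _ _) ?_
        intro S _ _
        exact mul_nonneg (wgt_nonneg T i S) (by positivity)

end S10C

namespace S10C
set_option linter.unusedSectionVars false
open SimpleGraph S10

variable {V : Type} [Fintype V] [DecidableEq V]

lemma level_zero {G : SimpleGraph V} (hconn : G.Connected) (T : Finset V) {a b : V}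
    (ha : a ∈ T) (hb : b ∈ T) (hab : a ≠ b) {R : ℕ} (hR : 1 ≤ R) :
    (3:ℝ)/16 ≤ ∑ S ∈ T.powerset, wgt T (pr 0) S *
      (((Finset.range R).filter (fun r => Crosses (cutC G S r) s(a, b))).card : ℝ) := by
  have hev := sum_weight_event T {a} {b} (Finset.singleton_subset_iff.2 ha)
    (Finset.singleton_subset_iff.2 hb) (Finset.disjoint_singleton.2 hab) (pr 0)
  have hpr0 : pr 0 = 1/4 := by unfold pr; norm_num
  have h316 : ∑ S ∈ T.powerset.filter (fun S => (S ∩ {a}).Nonempty ∧ S ∩ {b} = ∅),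
      wgt T (pr 0) S = 3/16 := by
    refine Eq.trans (hev : _) ?_
    rw [hpr0, Finset.card_singleton, Finset.card_singleton]
    norm_num
  have hsep : ∀ S ∈ T.powerset.filter (fun S => (S ∩ {a}).Nonempty ∧ S ∩ {b} = ∅),
      (1:ℝ) ≤
        (((Finset.range R).filter (fun r => Crosses (cutC G S r) s(a, b))).card : ℝ) := by
    intro S hS
    rw [Finset.mem_filter, Finset.mem_powerset] at hS
    obtain ⟨hST, ⟨t, ht⟩, hSb⟩ := hS
    rw [Finset.mem_inter, Finset.mem_singleton] at ht
    obtain ⟨htS, hta⟩ := ht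
    have h0 : 0 ∈ (Finset.range R).filter (fun r => Crosses (cutC G S r) s(a, b)) := by
      rw [Finset.mem_filter, Finset.mem_range]
      refine ⟨by omega, a, b, rfl, ?_, ?_⟩
      · exact mem_cutC.2 ⟨t, htS, by rw [hta, SimpleGraph.dist_self]⟩
      · intro hmem
        obtain ⟨s, hsS, hds⟩ := mem_cutC.1 hmem
        have hbs : b = s := hconn.dist_eq_zero_iff.1 (by omega)
        subst hbs
        have : b ∈ S ∩ {b} := Finset.mem_inter.2 ⟨hsS, Finset.mem_singleton_self b⟩
        rw [hSb] at this
        exact absurd this (Finset.notMem_empty b)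
    have : 1 ≤ ((Finset.range R).filter (fun r => Crosses (cutC G S r) s(a, b))).card :=
      Finset.card_pos.2 ⟨0, h0⟩
    exact_mod_cast this
  calc (3:ℝ)/16
      = ∑ S ∈ T.powerset.filter (fun S => (S ∩ {a}).Nonempty ∧ S ∩ {b} = ∅),
          wgt T (pr 0) S * 1 := by
        simp only [mul_one]
        rw [h316]
    _ ≤ ∑ S ∈ T.powerset.filter (fun S => (S ∩ {a}).Nonempty ∧ S ∩ {b} = ∅),
          wgt T (pr 0) S *
            (((Finset.range R).filter (fun r => Crosses (cutC G S r) s(a, b))).card : ℝ) := by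
        refine Finset.sum_le_sum (fun S hS => ?_)
        exact mul_le_mul_of_nonneg_left (hsep S hS) (wgt_nonneg T 0 S)
    _ ≤ ∑ S ∈ T.powerset, wgt T (pr 0) S *
          (((Finset.range R).filter (fun r => Crosses (cutC G S r) s(a, b))).card : ℝ) := by
        refine Finset.sum_le_sum_of_subset_of_nonneg (Finset.filter_subset _ _) ?_
        intro S _ _
        exact mul_nonneg (wgt_nonneg T 0 S) (by positivity)

lemma perPair {G : SimpleGraph V} (hconn : G.Connected) (T : Finset V) {a b : V}
    (ha : a ∈ T) (hb : b ∈ T) (hab : a ≠ b) (I R : ℕ)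
    (hTI : T.card ≤ 2 ^ I) (hI1 : 1 ≤ I) (hR : G.dist a b < R) :
    (G.dist a b : ℝ) ≤ 80 * ∑ i ∈ Finset.range I, ∑ S ∈ T.powerset,
      wgt T (pr i) S *
        (((Finset.range R).filter (fun r => Crosses (cutC G S r) s(a, b))).card : ℝ) := by
  have hd1 : 1 ≤ G.dist a b := hconn.pos_dist_of_ne hab
  set d := G.dist a b with hddef
  set cap := d / 4 with hcapdef
  have hex : ∀ j : ℕ, ∃ r, min (2 ^ j) T.card ≤ (tball G T a r).card ∧
      min (2 ^ j) T.card ≤ (tball G T b r).card := by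
    intro j
    refine ⟨Finset.univ.sup (fun q : V × V => G.dist q.1 q.2), ?_, ?_⟩
    all_goals
      rw [show tball G T _ (Finset.univ.sup (fun q : V × V => G.dist q.1 q.2)) = T from
        Finset.filter_true_of_mem (fun t _ =>
          Finset.le_sup (f := fun q : V × V => G.dist q.1 q.2) (Finset.mem_univ (_, t)))]
      exact min_le_right _ _
  set rr : ℕ → ℕ := fun j => Nat.find (hex j) with hrrdef
  set rhat : ℕ → ℕ := fun j => min (rr j) cap with hrhatdef
  have hrrmono : ∀ {j j' : ℕ}, j ≤ j' → rr j ≤ rr j' := by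
    intro j j' h
    refine Nat.find_mono (fun n hn => ?_)
    have hpw : (2:ℕ)^j ≤ 2^j' := Nat.pow_le_pow_right (by norm_num) h
    exact ⟨le_trans (by omega : min (2^j) T.card ≤ min (2^j') T.card) hn.1,
      le_trans (by omega) hn.2⟩
  have hrr0 : rr 0 = 0 := by
    rw [hrrdef, Nat.find_eq_zero]
    have hamem : a ∈ tball G T a 0 := by
      rw [tball, Finset.mem_filter]
      exact ⟨ha, by rw [SimpleGraph.dist_self]⟩
    have hbmem : b ∈ tball G T b 0 := by
      rw [tball, Finset.mem_filter]
      exact ⟨hb, by rw [SimpleGraph.dist_self]⟩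
    have h1 : 1 ≤ (tball G T a 0).card := Finset.card_pos.2 ⟨a, hamem⟩
    have h2 : 1 ≤ (tball G T b 0).card := Finset.card_pos.2 ⟨b, hbmem⟩
    constructor <;> · simp only [pow_zero]; omega
  have hrhat0 : rhat 0 = 0 := by rw [hrhatdef]; simp [hrr0]
  have hcapd : cap < d := by omega
  have hrhatI : rhat I = cap := by
    have hcrr : cap ≤ rr I := by
      by_contra hc
      push_neg at hc
      have hspec : min (2 ^ I) T.card ≤ (tball G T a (rr I)).card := (Nat.find_spec (hex I)).1
      have hτI : min (2 ^ I) T.card = T.card := min_eq_right hTI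
      have hsub : tball G T a (rr I) ⊆ T.erase b := by
        intro t ht
        rw [tball, Finset.mem_filter] at ht
        refine Finset.mem_erase.2 ⟨?_, ht.1⟩
        rintro rfl
        omega
      have hcard := Finset.card_le_card hsub
      rw [Finset.card_erase_of_mem hb] at hcard
      have hT1 : 1 ≤ T.card := Finset.card_pos.2 ⟨a, ha⟩
      omega
    rw [hrhatdef]
    exact min_eq_right hcrr
  have hEnn : ∀ i : ℕ, (0:ℝ) ≤ ∑ S ∈ T.powerset, wgt T (pr i) S *
      (((Finset.range R).filter (fun r => Crosses (cutC G S r) s(a, b))).card : ℝ) := by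
    intro i
    refine Finset.sum_nonneg (fun S _ => mul_nonneg (wgt_nonneg T i S) (by positivity))
  have hlvl : ∀ i ∈ Finset.range I,
      (1:ℝ)/10 * ((rhat (i+1) : ℝ) - (rhat i : ℝ)) ≤
        ∑ S ∈ T.powerset, wgt T (pr i) S *
          (((Finset.range R).filter (fun r => Crosses (cutC G S r) s(a, b))).card : ℝ) := by
    intro i _
    by_cases hstep : rhat (i+1) ≤ rhat i
    · have hc : ((rhat (i+1) : ℝ)) - (rhat i : ℝ) ≤ 0 := by
        have : (rhat (i+1) : ℝ) ≤ (rhat i : ℝ) := by exact_mod_cast hstep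
        linarith
      have := hEnn i
      linarith
    · push_neg at hstep
      have hρcap : rhat (i+1) ≤ cap := min_le_right _ _
      have hρ'rr : rhat i = rr i := by
        rcases le_total (rr i) cap with h | h
        · rw [hrhatdef]; exact min_eq_left h
        · exfalso
          have : rhat i = cap := by rw [hrhatdef]; exact min_eq_right h
          omega
      have hττ : min (2 ^ i) T.card < min (2 ^ (i+1)) T.card := by
        by_contra hc
        push_neg at hc
        have h1 : rr (i+1) ≤ rr i := Nat.find_mono (fun n hn =>
          ⟨le_trans hc hn.1, le_trans hc hn.2⟩)
        have h2 : rr i ≤ rr (i+1) := hrrmono (by omega)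
        have : rr i = rr (i+1) := le_antisymm h2 h1
        have : rhat i = rhat (i+1) := by rw [hrhatdef]; simp only [this]
        omega
      have hpw : (2:ℕ)^i ≤ 2^(i+1) := Nat.pow_le_pow_right (by norm_num) (by omega)
      have hτi : min (2 ^ i) T.card = 2 ^ i := by omega
      have hspec := Nat.find_spec (hex i)
      have hAa : 2 ^ i ≤ (tball G T a (rhat i)).card := by
        rw [hρ'rr]; exact le_trans (le_of_eq hτi.symm) hspec.1
      have hAb : 2 ^ i ≤ (tball G T b (rhat i)).card := by
        rw [hρ'rr]; exact le_trans (le_of_eq hτi.symm) hspec.2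
      have hmin : ¬ (min (2 ^ (i+1)) T.card ≤ (tball G T a (rhat (i+1) - 1)).card ∧
          min (2 ^ (i+1)) T.card ≤ (tball G T b (rhat (i+1) - 1)).card) := by
        have h1 : rhat (i+1) ≤ rr (i+1) := min_le_left _ _
        have h2 : rhat (i+1) - 1 < rr (i+1) := by omega
        exact Nat.find_min (hex (i+1)) h2
      have hτ1 : min (2 ^ (i+1)) T.card ≤ 2^(i+1) := min_le_left _ _
      have hcap4 : 4 * cap ≤ d := by omega
      rcases not_and_or.1 hmin with hm | hm
      · push_neg at hm
        exact level_core hconn T (Sym2.eq_swap) (SimpleGraph.dist_comm.trans hddef.symm)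
          hstep hρcap hcap4 hR (lt_of_lt_of_le hm hτ1) hAb
      · push_neg at hm
        exact level_core hconn T (rfl) hddef.symm
          hstep hρcap hcap4 hR (lt_of_lt_of_le hm hτ1) hAa
  have htel : ∑ i ∈ Finset.range I, (((rhat (i+1) : ℝ)) - (rhat i : ℝ)) = cap := by
    rw [Finset.sum_range_sub (fun i => (rhat i : ℝ))]
    rw [hrhatI, hrhat0]
    simp
  have hsum1 : (1:ℝ)/10 * cap ≤ ∑ i ∈ Finset.range I, ∑ S ∈ T.powerset,
      wgt T (pr i) S *
        (((Finset.range R).filter (fun r => Crosses (cutC G S r) s(a, b))).card : ℝ) := by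
    calc (1:ℝ)/10 * cap
        = ∑ i ∈ Finset.range I, (1:ℝ)/10 * (((rhat (i+1) : ℝ)) - (rhat i : ℝ)) := by
          rw [← Finset.mul_sum, htel]
      _ ≤ _ := Finset.sum_le_sum hlvl
  have hsum2 : (3:ℝ)/16 ≤ ∑ i ∈ Finset.range I, ∑ S ∈ T.powerset,
      wgt T (pr i) S *
        (((Finset.range R).filter (fun r => Crosses (cutC G S r) s(a, b))).card : ℝ) := by
    refine le_trans (level_zero hconn T ha hb hab (R := R) (by omega)) ?_
    exact Finset.single_le_sum (f := fun i => ∑ S ∈ T.powerset, wgt T (pr i) S *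
      (((Finset.range R).filter (fun r => Crosses (cutC G S r) s(a, b))).card : ℝ))
      (fun i _ => hEnn i) (Finset.mem_range.2 (by omega))
  rcases le_or_gt d 7 with hd7 | hd8
  · have : (d:ℝ) ≤ 7 := by exact_mod_cast hd7
    linarith
  · have h8 : d ≤ 8 * cap := by omega
    have : (d:ℝ) ≤ 8 * (cap:ℝ) := by exact_mod_cast h8
    linarith

end S10C

namespace S10C
set_option linter.unusedSectionVars false
open SimpleGraph S10

variable {V : Type} [Fintype V] [DecidableEq V]

lemma logb_ge_one {k : ℕ} (hk : 2 ≤ k) : 1 ≤ Real.logb 2 k := by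
  have h2 : (2:ℝ) ≤ (k:ℝ) := by exact_mod_cast hk
  calc (1:ℝ) = Real.logb 2 2 := (Real.logb_self_eq_one (by norm_num : (1:ℝ) < 2)).symm
    _ ≤ Real.logb 2 k := Real.logb_le_logb_of_le (by norm_num) (by norm_num) h2

lemma clog_le_logb {k : ℕ} (hk : 2 ≤ k) :
    ((Nat.clog 2 k + 1 : ℕ) : ℝ) ≤ 3 * Real.logb 2 k := by
  have h1 : (2:ℕ) ^ (Nat.clog 2 k - 1) < k := Nat.pow_pred_clog_lt_self (by norm_num) (by omega)
  have h2 : ((2:ℝ)) ^ (Nat.clog 2 k - 1) < (k:ℝ) := by exact_mod_cast h1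
  have h3 : ((Nat.clog 2 k - 1 : ℕ) : ℝ) < Real.logb 2 k := by
    have := Real.logb_lt_logb (b := 2) (by norm_num) (x := (2:ℝ)^(Nat.clog 2 k - 1))
      (by positivity) h2
    rwa [Real.logb_pow, Real.logb_self_eq_one (by norm_num : (1:ℝ) < 2), mul_one] at this
  have h4 : (Nat.clog 2 k : ℝ) ≤ ((Nat.clog 2 k - 1 : ℕ) : ℝ) + 1 := by
    have : Nat.clog 2 k ≤ (Nat.clog 2 k - 1) + 1 := by omega
    exact_mod_cast this
  have h5 := logb_ge_one hk
  push_cast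
  push_cast at h4
  linarith

lemma lowerBound {G : SimpleGraph V} (hconn : G.Connected) (ℓ : ℕ)
    (K : Fin ℓ → Finset V) (M : Fin ℓ → Finset (Sym2 V))
    (hpm : ∀ i, IsPerfectMatchingOn (K i) (M i))
    (hk : 2 ≤ ∑ i, (K i).card)
    (x : Sym2 V → ℝ) (hx0 : ∀ e, 0 ≤ x e)
    (hfeas : ∀ C : Finset V, IsCut C →
      (∑ j, ((((M j).filter (Crosses C)).card : ℝ))) ≤ ∑ e ∈ cutEdges G C, x e) :
    (∑ j, (matchCost G (M j) : ℝ)) ≤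
      240 * Real.logb 2 ((∑ i, (K i).card : ℕ) : ℝ) * ∑ e ∈ G.edgeFinset, x e := by
  set kk := ∑ i, (K i).card with hkk
  set T : Finset V := Finset.univ.biUnion K with hT
  set I : ℕ := Nat.clog 2 kk + 1 with hI
  set R : ℕ := Finset.univ.sup (fun q : V × V => G.dist q.1 q.2) + 1 with hRdef
  set X : ℝ := ∑ e ∈ G.edgeFinset, x e with hX
  have hX0 : 0 ≤ X := Finset.sum_nonneg (fun e _ => hx0 e)
  have hTk : T.card ≤ kk := by
    rw [hT, hkk]
    exact Finset.card_biUnion_le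
  have hTI : T.card ≤ 2 ^ I := by
    calc T.card ≤ kk := hTk
      _ ≤ 2 ^ Nat.clog 2 kk := Nat.le_pow_clog (by norm_num) kk
      _ ≤ 2 ^ I := Nat.pow_le_pow_right (by norm_num) (by omega)
  set Tot : ℝ := ∑ i ∈ Finset.range I, ∑ S ∈ T.powerset, wgt T (pr i) S *
      (∑ r ∈ Finset.range R, ∑ j, ((((M j).filter (Crosses (cutC G S r))).card : ℝ)))
    with hTot
  -- upper bound on Tot
  have hub : Tot ≤ I * X := by
    have hSR : ∀ S ∈ T.powerset,
        (∑ r ∈ Finset.range R, ∑ j, ((((M j).filter (Crosses (cutC G S r))).card : ℝ))) ≤ X := by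
      intro S _
      have step1 : ∀ r : ℕ,
          (∑ j, ((((M j).filter (Crosses (cutC G S r))).card : ℝ)))
            ≤ ∑ e ∈ cutEdges G (cutC G S r), x e := by
        intro r
        by_cases hcut : IsCut (cutC G S r)
        · exact hfeas _ hcut
        · have h0 : (∑ j, ((((M j).filter (Crosses (cutC G S r))).card : ℝ))) = 0 := by
            refine Finset.sum_eq_zero (fun j _ => ?_)
            rw [show (M j).filter (Crosses (cutC G S r)) = ∅ from
              Finset.filter_eq_empty_iff.2 (fun _ _ hcr => hcut (isCut_of_crosses hcr))]
            simp
          rw [h0]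
          exact Finset.sum_nonneg (fun e _ => hx0 e)
      calc (∑ r ∈ Finset.range R, ∑ j, ((((M j).filter (Crosses (cutC G S r))).card : ℝ)))
          ≤ ∑ r ∈ Finset.range R, ∑ e ∈ cutEdges G (cutC G S r), x e :=
            Finset.sum_le_sum (fun r _ => step1 r)
        _ = ∑ e ∈ G.edgeFinset, ∑ r ∈ Finset.range R,
              (if Crosses (cutC G S r) e then x e else 0) := by
            rw [Finset.sum_comm]
            refine Finset.sum_congr rfl (fun r _ => ?_)
            rw [cutEdges, Finset.sum_filter]
        _ ≤ X := by
            rw [hX]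
            refine Finset.sum_le_sum (fun e he => ?_)
            have hrw : ∑ r ∈ Finset.range R, (if Crosses (cutC G S r) e then x e else 0)
                = (((Finset.range R).filter (fun r => Crosses (cutC G S r) e)).card : ℝ) * x e := by
              rw [← Finset.sum_filter, Finset.sum_const, nsmul_eq_mul]
            rw [hrw]
            have hle1 := cross_count_le_one hconn S R he
            have hle1' : ((((Finset.range R).filter
                (fun r => Crosses (cutC G S r) e)).card : ℝ)) ≤ 1 := by
              exact_mod_cast hle1
            nlinarith [hx0 e, hle1',
              Nat.cast_nonneg (α := ℝ) (((Finset.range R).filter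
                (fun r => Crosses (cutC G S r) e)).card)]
    calc Tot ≤ ∑ i ∈ Finset.range I, ∑ S ∈ T.powerset, wgt T (pr i) S * X := by
          rw [hTot]
          refine Finset.sum_le_sum (fun i _ => Finset.sum_le_sum (fun S hS => ?_))
          exact mul_le_mul_of_nonneg_left (hSR S hS) (wgt_nonneg T i S)
      _ = ∑ _i ∈ Finset.range I, X := by
          refine Finset.sum_congr rfl (fun i _ => ?_)
          rw [← Finset.sum_mul]
          rw [show ∑ S ∈ T.powerset, wgt T (pr i) S = 1 from sum_powerset_weight T (pr i)]
          rw [one_mul]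
      _ = I * X := by
          rw [Finset.sum_const, Finset.card_range, nsmul_eq_mul]
  -- lower bound on Tot
  have hlb : (∑ j, (matchCost G (M j) : ℝ)) ≤ 80 * Tot := by
    have inner : ∀ S : Finset V,
        (∑ r ∈ Finset.range R, ∑ j, ((((M j).filter (Crosses (cutC G S r))).card : ℝ)))
          = ∑ j, ∑ p ∈ M j,
              (((Finset.range R).filter (fun r => Crosses (cutC G S r) p)).card : ℝ) := by
      intro S
      rw [Finset.sum_comm]
      refine Finset.sum_congr rfl (fun j _ => ?_)
      have hc : ∀ r : ℕ, ((((M j).filter (Crosses (cutC G S r))).card : ℝ))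
          = ∑ p ∈ M j, (if Crosses (cutC G S r) p then (1:ℝ) else 0) := by
        intro r
        rw [Finset.card_filter]
        push_cast
        rfl
      rw [Finset.sum_congr rfl (fun r _ => hc r), Finset.sum_comm]
      refine Finset.sum_congr rfl (fun p _ => ?_)
      rw [Finset.card_filter]
      push_cast
      rfl
    have e1 : Tot = ∑ j, ∑ p ∈ M j, ∑ i ∈ Finset.range I, ∑ S ∈ T.powerset,
        wgt T (pr i) S *
          (((Finset.range R).filter (fun r => Crosses (cutC G S r) p)).card : ℝ) := by
      calc Tot = ∑ i ∈ Finset.range I, ∑ S ∈ T.powerset, ∑ j, ∑ p ∈ M j,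
            wgt T (pr i) S *
              (((Finset.range R).filter (fun r => Crosses (cutC G S r) p)).card : ℝ) := by
            rw [hTot]
            refine Finset.sum_congr rfl (fun i _ => Finset.sum_congr rfl (fun S _ => ?_))
            rw [inner S, Finset.mul_sum]
            refine Finset.sum_congr rfl (fun j _ => ?_)
            rw [Finset.mul_sum]
        _ = ∑ i ∈ Finset.range I, ∑ j, ∑ S ∈ T.powerset, ∑ p ∈ M j, _ :=
            Finset.sum_congr rfl (fun i _ => Finset.sum_comm)
        _ = ∑ j, ∑ i ∈ Finset.range I, ∑ S ∈ T.powerset, ∑ p ∈ M j, _ :=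
            Finset.sum_comm
        _ = ∑ j, ∑ i ∈ Finset.range I, ∑ p ∈ M j, ∑ S ∈ T.powerset, _ :=
            Finset.sum_congr rfl (fun j _ => Finset.sum_congr rfl
              (fun i _ => Finset.sum_comm))
        _ = ∑ j, ∑ p ∈ M j, ∑ i ∈ Finset.range I, ∑ S ∈ T.powerset, _ :=
            Finset.sum_congr rfl (fun j _ => Finset.sum_comm)
    have hPhi : ∀ j : Fin ℓ, ∀ p ∈ M j,
        ((Sym2.lift ⟨fun u v => G.dist u v, fun _ _ => SimpleGraph.dist_comm⟩ p : ℕ) : ℝ) ≤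
          80 * ∑ i ∈ Finset.range I, ∑ S ∈ T.powerset, wgt T (pr i) S *
            (((Finset.range R).filter (fun r => Crosses (cutC G S r) p)).card : ℝ) := by
      intro j p hp
      have hdiag := (hpm j).1 p hp
      have hmemK := (hpm j).2.2 p hp
      revert hdiag hmemK
      refine Sym2.inductionOn p (fun a b => ?_)
      intro hdiag hmemK
      have hab : a ≠ b := by simpa [Sym2.mk_isDiag_iff] using hdiag
      have haT : a ∈ T := by
        rw [hT]
        exact Finset.mem_biUnion.2 ⟨j, Finset.mem_univ j, hmemK a (Sym2.mem_mk_left a b)⟩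
      have hbT : b ∈ T := by
        rw [hT]
        exact Finset.mem_biUnion.2 ⟨j, Finset.mem_univ j, hmemK b (Sym2.mem_mk_right a b)⟩
      have hdR : G.dist a b < R := by
        rw [hRdef]
        exact Nat.lt_succ_of_le (Finset.le_sup (f := fun q : V × V => G.dist q.1 q.2)
          (Finset.mem_univ (a, b)))
      have hpp := perPair hconn T haT hbT hab I R hTI (by omega) hdR
      simpa [Sym2.lift_mk] using hpp
    calc (∑ j, (matchCost G (M j) : ℝ))
        = ∑ j, ∑ p ∈ M j,
            ((Sym2.lift ⟨fun u v => G.dist u v, fun _ _ => SimpleGraph.dist_comm⟩ p : ℕ) : ℝ) := by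
          refine Finset.sum_congr rfl (fun j _ => ?_)
          rw [matchCost]
          push_cast
          rfl
      _ ≤ ∑ j, ∑ p ∈ M j, 80 * ∑ i ∈ Finset.range I, ∑ S ∈ T.powerset, wgt T (pr i) S *
            (((Finset.range R).filter (fun r => Crosses (cutC G S r) p)).card : ℝ) := by
          exact Finset.sum_le_sum (fun j _ => Finset.sum_le_sum (fun p hp => hPhi j p hp))
      _ = 80 * Tot := by
          rw [e1, Finset.mul_sum]
          refine Finset.sum_congr rfl (fun j _ => ?_)
          rw [Finset.mul_sum]
  -- combine
  have hIlog : (I : ℝ) ≤ 3 * Real.logb 2 kk := by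
    rw [hI]
    exact_mod_cast clog_le_logb hk
  have hlog1 : (1:ℝ) ≤ Real.logb 2 kk := logb_ge_one hk
  calc (∑ j, (matchCost G (M j) : ℝ)) ≤ 80 * Tot := hlb
    _ ≤ 80 * (I * X) := by nlinarith [hub]
    _ ≤ 80 * ((3 * Real.logb 2 kk) * X) := by nlinarith [hIlog, hX0]
    _ = 240 * Real.logb 2 (kk : ℝ) * X := by ring
end S10C


/-- There is an absolute constant `c > 0` such that for every finite connected
simple graph `G`, terminal sets `K₁,…,K_ℓ` of even size with `k = ∑|K_i| ≥ 2`, and perfect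
matchings `M_i` of `K_i` with `d(G,M_i) ≥ σ_{K_i}(G)/2`, taking `b^j(C)` to be the number of
pairs of `M_j` separated by `C`:
`c·(∑ σ_{K_i}(G))/log₂ k ≤ LP^L(G) ≤ LP^U(G) ≤ ∑ σ_{K_i}(G)`. -/
theorem statement10 :
    ∃ c : ℝ, 0 < c ∧
      ∀ (V : Type) [Fintype V] [DecidableEq V] (G : SimpleGraph V),
        G.Connected →
        ∀ (ℓ : ℕ) (K : Fin ℓ → Finset V) (M : Fin ℓ → Finset (Sym2 V)),
          (∀ i, Even (K i).card) →
          2 ≤ ∑ i, (K i).card →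
          (∀ i, IsPerfectMatchingOn (K i) (M i)) →
          (∀ i, (sigmaK G (K i) : ℝ) / 2 ≤ (matchCost G (M i) : ℝ)) →
          c * (∑ i, (sigmaK G (K i) : ℝ)) / Real.logb 2 ((∑ i, (K i).card : ℕ) : ℝ) ≤
              LPL G ℓ (fun j C => (((M j).filter (Crosses C)).card : ℝ)) ∧
          LPL G ℓ (fun j C => (((M j).filter (Crosses C)).card : ℝ)) ≤
              LPU G ℓ (fun j C => (((M j).filter (Crosses C)).card : ℝ)) ∧
          LPU G ℓ (fun j C => (((M j).filter (Crosses C)).card : ℝ)) ≤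
              ∑ i, (sigmaK G (K i) : ℝ) := by
  classical
  refine ⟨1/480, by norm_num, ?_⟩
  intro V _ _ G hconn ℓ K M heven hk hpm hhalf
  set b : Fin ℓ → Finset V → ℝ := fun j C => (((M j).filter (Crosses C)).card : ℝ) with hbdef
  set SL : Set ℝ := { y | ∃ x : Sym2 V → ℝ, (∀ e, 0 ≤ x e) ∧
    (∀ C : Finset V, IsCut C → ∑ i, b i C ≤ ∑ e ∈ cutEdges G C, x e) ∧
    y = ∑ e ∈ G.edgeFinset, x e } with hSL
  set SU : Set ℝ := { y | ∃ x : Fin ℓ → Sym2 V → ℝ, (∀ i e, 0 ≤ x i e) ∧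
    (∀ (i : Fin ℓ) (C : Finset V), IsCut C → b i C ≤ ∑ e ∈ cutEdges G C, x i e) ∧
    y = ∑ i, ∑ e ∈ G.edgeFinset, x i e } with hSU
  have hLPLdef : LPL G ℓ b = sInf SL := rfl
  have hLPUdef : LPU G ℓ b = sInf SU := rfl
  obtain ⟨xU, hxU0, hxUfeas, hxUval⟩ := S10B.lpu_witness hconn ℓ K M hpm
  have hUmem : (∑ i, (sigmaK G (K i) : ℝ)) ∈ SU := ⟨xU, hxU0, hxUfeas, hxUval.symm⟩
  have hUbdd : BddBelow SU := by
    refine ⟨0, fun y hy => ?_⟩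
    obtain ⟨x, hx0, _, rfl⟩ := hy
    exact Finset.sum_nonneg (fun i _ => Finset.sum_nonneg (fun e _ => hx0 i e))
  have hLbdd : BddBelow SL := by
    refine ⟨0, fun y hy => ?_⟩
    obtain ⟨x, hx0, _, rfl⟩ := hy
    exact Finset.sum_nonneg (fun e _ => hx0 e)
  have hsub : SU ⊆ SL := by
    rintro y ⟨x, hx0, hfeas, rfl⟩
    refine ⟨fun e => ∑ i, x i e, fun e => Finset.sum_nonneg (fun i _ => hx0 i e), ?_, ?_⟩
    · intro C hC
      calc ∑ i, b i C ≤ ∑ i, ∑ e ∈ cutEdges G C, x i e :=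
            Finset.sum_le_sum (fun i _ => hfeas i C hC)
        _ = ∑ e ∈ cutEdges G C, ∑ i, x i e := Finset.sum_comm
    · exact Finset.sum_comm
  have hLne : SL.Nonempty := ⟨_, hsub hUmem⟩
  have h3 : LPU G ℓ b ≤ ∑ i, (sigmaK G (K i) : ℝ) := csInf_le hUbdd hUmem
  have h2 : LPL G ℓ b ≤ LPU G ℓ b := csInf_le_csInf hLbdd ⟨_, hUmem⟩ hsub
  have hlog1 : (1:ℝ) ≤ Real.logb 2 ((∑ i, (K i).card : ℕ) : ℝ) := S10C.logb_ge_one hk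
  have hlogpos : (0:ℝ) < Real.logb 2 ((∑ i, (K i).card : ℕ) : ℝ) := by linarith
  have h1 : (1:ℝ)/480 * (∑ i, (sigmaK G (K i) : ℝ)) /
      Real.logb 2 ((∑ i, (K i).card : ℕ) : ℝ) ≤ LPL G ℓ b := by
    rw [hLPLdef]
    refine le_csInf hLne ?_
    rintro y ⟨x, hx0, hfeas, rfl⟩
    have hlow := S10C.lowerBound hconn ℓ K M hpm hk x hx0 hfeas
    have hsig : (∑ i, (sigmaK G (K i) : ℝ)) ≤ 2 * ∑ j, (matchCost G (M j) : ℝ) := by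
      rw [Finset.mul_sum]
      refine Finset.sum_le_sum (fun i _ => ?_)
      have := hhalf i
      linarith
    have hy0 : (0:ℝ) ≤ ∑ e ∈ G.edgeFinset, x e := Finset.sum_nonneg (fun e _ => hx0 e)
    rw [div_le_iff₀ hlogpos]
    nlinarith [hlow, hsig, hy0, hlog1]
  exact ⟨h1, h2, h3⟩
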